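/- Let g, h ∈ L¹(a,b) with g ≥ 0 a.e. and h > 0 a.e. on (a,b). For every measurable set J ⊆ (a,b) with m(J) > 0, there is a measurable set J₀ ⊆ J with m(J \ J₀) = 0 such that for all τ₀ ∈ J₀: lim_{t→τ₀⁺} (∫_{[τ₀,t]\J} g ds)/(∫_{τ₀}^{t} h ds) = 0 and lim_{t→τ₀⁻} (∫_{[t,τ₀]\J} g ds)/(∫_{t}^{τ₀} h ds) = 0. -/

import Mathlib

open Set Filter MeasureTheory intervalIntegral

section Aux
open Metric

private lemma stmt12_sub_map_right (x : ℝ) :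
    Tendsto (fun t : ℝ => t - x) (nhdsWithin x (Ioi x)) (nhdsWithin 0 (Ioi 0)) := by
  rw [tendsto_nhdsWithin_iff]
  refine ⟨?_, ?_⟩
  · have h := (continuous_sub_right x).tendsto x
    rw [sub_self] at h
    exact h.mono_left nhdsWithin_le_nhds
  · filter_upwards [self_mem_nhdsWithin] with t ht
    simpa using (mem_Ioi.1 ht)

private lemma stmt12_sub_map_left (x : ℝ) :
    Tendsto (fun t : ℝ => x - t) (nhdsWithin x (Iio x)) (nhdsWithin 0 (Ioi 0)) := by
  rw [tendsto_nhdsWithin_iff]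
  refine ⟨?_, ?_⟩
  · have h := (continuous_sub_left x).tendsto x
    rw [sub_self] at h
    exact h.mono_left nhdsWithin_le_nhds
  · filter_upwards [self_mem_nhdsWithin] with t ht
    simpa using (mem_Iio.1 ht)

private lemma stmt12_int_le_avg (F : ℝ → ℝ) (hF : Integrable F) (x : ℝ) {r : ℝ} (hr : 0 < r)
    {s : Set ℝ} (hsub : s ⊆ closedBall x r) :
    (∫ y in s, ‖F y - F x‖) / r ≤ 2 * ⨍ y in closedBall x r, ‖F y - F x‖ := by
  have hint : IntegrableOn (fun y => ‖F y - F x‖) (closedBall x r) volume :=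
    ((hF.integrableOn).sub (integrableOn_const (measure_closedBall_lt_top).ne)).norm
  have h1 : (∫ y in s, ‖F y - F x‖) ≤ ∫ y in closedBall x r, ‖F y - F x‖ := by
    apply setIntegral_mono_set hint
    · filter_upwards with y using norm_nonneg _
    · exact Filter.Eventually.of_forall hsub
  have h2 : (∫ y in closedBall x r, ‖F y - F x‖)
      = (2 * r) * ⨍ y in closedBall x r, ‖F y - F x‖ := by
    rw [setAverage_eq, Real.volume_real_closedBall hr.le,
      smul_eq_mul, ← mul_assoc, mul_inv_cancel₀ (by positivity), one_mul]
  calc (∫ y in s, ‖F y - F x‖) / r ≤ ((2 * r) * ⨍ y in closedBall x r, ‖F y - F x‖) / r := by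
        apply div_le_div_of_nonneg_right ?_ hr.le
        rw [← h2]; exact h1
    _ = 2 * ⨍ y in closedBall x r, ‖F y - F x‖ := by field_simp

private lemma stmt12_lebesgue (F : ℝ → ℝ) (hF : Integrable F) : ∀ᵐ x : ℝ,
    Tendsto (fun r => ⨍ y in closedBall x r, ‖F y - F x‖) (nhdsWithin 0 (Ioi 0)) (nhds 0) := by
  filter_upwards [IsUnifLocDoublingMeasure.ae_tendsto_average_norm_sub volume
    (hF.locallyIntegrable) 1] with x hx
  refine hx (fun _ => x) id tendsto_id ?_
  filter_upwards [self_mem_nhdsWithin] with r hr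
  have : (0:ℝ) ≤ 1 * r := by simpa using (le_of_lt (mem_Ioi.1 hr))
  exact mem_closedBall_self this

private lemma stmt12_avg_right (F : ℝ → ℝ) (hF : Integrable F) (x : ℝ)
    (hx : Tendsto (fun r => ⨍ y in closedBall x r, ‖F y - F x‖) (nhdsWithin 0 (Ioi 0)) (nhds 0)) :
    Tendsto (fun t => (∫ y in Icc x t, ‖F y - F x‖) / (t - x)) (nhdsWithin x (Ioi x)) (nhds 0) := by
  have hcomp : Tendsto (fun t => 2 * ⨍ y in closedBall x (t - x), ‖F y - F x‖)
      (nhdsWithin x (Ioi x)) (nhds 0) := by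
    have := (hx.comp (stmt12_sub_map_right x)).const_mul 2
    simpa using this
  apply squeeze_zero' ?_ ?_ hcomp
  · filter_upwards [self_mem_nhdsWithin] with t ht
    have htx : 0 < t - x := sub_pos.2 (mem_Ioi.1 ht)
    exact div_nonneg (setIntegral_nonneg measurableSet_Icc fun y _ => norm_nonneg _) htx.le
  · filter_upwards [self_mem_nhdsWithin] with t ht
    have htx : 0 < t - x := sub_pos.2 (mem_Ioi.1 ht)
    refine stmt12_int_le_avg F hF x htx ?_
    rw [Real.closedBall_eq_Icc]
    apply Icc_subset_Icc <;> linarith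

private lemma stmt12_avg_left (F : ℝ → ℝ) (hF : Integrable F) (x : ℝ)
    (hx : Tendsto (fun r => ⨍ y in closedBall x r, ‖F y - F x‖) (nhdsWithin 0 (Ioi 0)) (nhds 0)) :
    Tendsto (fun t => (∫ y in Icc t x, ‖F y - F x‖) / (x - t)) (nhdsWithin x (Iio x)) (nhds 0) := by
  have hcomp : Tendsto (fun t => 2 * ⨍ y in closedBall x (x - t), ‖F y - F x‖)
      (nhdsWithin x (Iio x)) (nhds 0) := by
    have := (hx.comp (stmt12_sub_map_left x)).const_mul 2
    simpa using this
  apply squeeze_zero' ?_ ?_ hcomp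
  · filter_upwards [self_mem_nhdsWithin] with t ht
    have htx : 0 < x - t := sub_pos.2 (mem_Iio.1 ht)
    exact div_nonneg (setIntegral_nonneg measurableSet_Icc fun y _ => norm_nonneg _) htx.le
  · filter_upwards [self_mem_nhdsWithin] with t ht
    have htx : 0 < x - t := sub_pos.2 (mem_Iio.1 ht)
    refine stmt12_int_le_avg F hF x htx ?_
    rw [Real.closedBall_eq_Icc]
    apply Icc_subset_Icc <;> linarith

private lemma stmt12_num_right (G : ℝ → ℝ) (x : ℝ) (hGx : G x = 0)
    (hA : Tendsto (fun t => (∫ y in Icc x t, ‖G y - G x‖) / (t - x)) (nhdsWithin x (Ioi x)) (nhds 0)) :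
    Tendsto (fun t => (∫ y in Icc x t, G y) / (t - x)) (nhdsWithin x (Ioi x)) (nhds 0) := by
  apply squeeze_zero_norm' ?_ hA
  filter_upwards [self_mem_nhdsWithin] with t ht
  have htx : 0 < t - x := sub_pos.2 (mem_Ioi.1 ht)
  rw [norm_div, Real.norm_of_nonneg htx.le]
  apply div_le_div_of_nonneg_right ?_ htx.le
  calc ‖∫ y in Icc x t, G y‖ ≤ ∫ y in Icc x t, ‖G y‖ := norm_integral_le_integral_norm _
    _ = ∫ y in Icc x t, ‖G y - G x‖ := by simp [hGx]

private lemma stmt12_num_left (G : ℝ → ℝ) (x : ℝ) (hGx : G x = 0)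
    (hA : Tendsto (fun t => (∫ y in Icc t x, ‖G y - G x‖) / (x - t)) (nhdsWithin x (Iio x)) (nhds 0)) :
    Tendsto (fun t => (∫ y in Icc t x, G y) / (x - t)) (nhdsWithin x (Iio x)) (nhds 0) := by
  apply squeeze_zero_norm' ?_ hA
  filter_upwards [self_mem_nhdsWithin] with t ht
  have htx : 0 < x - t := sub_pos.2 (mem_Iio.1 ht)
  rw [norm_div, Real.norm_of_nonneg htx.le]
  apply div_le_div_of_nonneg_right ?_ htx.le
  calc ‖∫ y in Icc t x, G y‖ ≤ ∫ y in Icc t x, ‖G y‖ := norm_integral_le_integral_norm _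
    _ = ∫ y in Icc t x, ‖G y - G x‖ := by simp [hGx]

private lemma stmt12_den_right (H : ℝ → ℝ) (hH : Integrable H) (x : ℝ)
    (hA : Tendsto (fun t => (∫ y in Icc x t, ‖H y - H x‖) / (t - x)) (nhdsWithin x (Ioi x)) (nhds 0)) :
    Tendsto (fun t => (∫ y in Ioc x t, H y) / (t - x)) (nhdsWithin x (Ioi x)) (nhds (H x)) := by
  rw [tendsto_iff_norm_sub_tendsto_zero]
  apply squeeze_zero' (Filter.Eventually.of_forall fun t => norm_nonneg _) ?_ hA
  filter_upwards [self_mem_nhdsWithin] with t ht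
  have htx : 0 < t - x := sub_pos.2 (mem_Ioi.1 ht)
  have hIoc : IntegrableOn H (Ioc x t) volume := hH.integrableOn
  have hconst : IntegrableOn (fun _ : ℝ => H x) (Ioc x t) volume :=
    integrableOn_const measure_Ioc_lt_top.ne
  have key : (∫ y in Ioc x t, H y) / (t - x) - H x
      = (∫ y in Ioc x t, (H y - H x)) / (t - x) := by
    rw [integral_sub hIoc hconst, setIntegral_const, Real.volume_real_Ioc_of_le (sub_pos.1 htx).le,
      smul_eq_mul, sub_div,
      mul_div_cancel_left₀ _ htx.ne']
  rw [key, norm_div, Real.norm_of_nonneg htx.le]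
  apply div_le_div_of_nonneg_right ?_ htx.le
  have hnormint : IntegrableOn (fun y => ‖H y - H x‖) (Icc x t) volume :=
    ((hH.integrableOn).sub (integrableOn_const measure_Icc_lt_top.ne)).norm
  calc ‖∫ y in Ioc x t, (H y - H x)‖ ≤ ∫ y in Ioc x t, ‖H y - H x‖ :=
        norm_integral_le_integral_norm _
    _ ≤ ∫ y in Icc x t, ‖H y - H x‖ := by
        apply setIntegral_mono_set hnormint
        · filter_upwards with y using norm_nonneg _
        · exact Filter.Eventually.of_forall Ioc_subset_Icc_self

private lemma stmt12_den_left (H : ℝ → ℝ) (hH : Integrable H) (x : ℝ)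
    (hA : Tendsto (fun t => (∫ y in Icc t x, ‖H y - H x‖) / (x - t)) (nhdsWithin x (Iio x)) (nhds 0)) :
    Tendsto (fun t => (∫ y in Ioc t x, H y) / (x - t)) (nhdsWithin x (Iio x)) (nhds (H x)) := by
  rw [tendsto_iff_norm_sub_tendsto_zero]
  apply squeeze_zero' (Filter.Eventually.of_forall fun t => norm_nonneg _) ?_ hA
  filter_upwards [self_mem_nhdsWithin] with t ht
  have htx : 0 < x - t := sub_pos.2 (mem_Iio.1 ht)
  have hIoc : IntegrableOn H (Ioc t x) volume := hH.integrableOn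
  have hconst : IntegrableOn (fun _ : ℝ => H x) (Ioc t x) volume :=
    integrableOn_const measure_Ioc_lt_top.ne
  have key : (∫ y in Ioc t x, H y) / (x - t) - H x
      = (∫ y in Ioc t x, (H y - H x)) / (x - t) := by
    rw [integral_sub hIoc hconst, setIntegral_const, Real.volume_real_Ioc_of_le (sub_pos.1 htx).le,
      smul_eq_mul, sub_div,
      mul_div_cancel_left₀ _ htx.ne']
  rw [key, norm_div, Real.norm_of_nonneg htx.le]
  apply div_le_div_of_nonneg_right ?_ htx.le
  have hnormint : IntegrableOn (fun y => ‖H y - H x‖) (Icc t x) volume :=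
    ((hH.integrableOn).sub (integrableOn_const measure_Icc_lt_top.ne)).norm
  calc ‖∫ y in Ioc t x, (H y - H x)‖ ≤ ∫ y in Ioc t x, ‖H y - H x‖ :=
        norm_integral_le_integral_norm _
    _ ≤ ∫ y in Icc t x, ‖H y - H x‖ := by
        apply setIntegral_mono_set hnormint
        · filter_upwards with y using norm_nonneg _
        · exact Filter.Eventually.of_forall Ioc_subset_Icc_self

private lemma stmt12_div_div {x y c : ℝ} (hc : c ≠ 0) : (x / c) / (y / c) = x / y := by
  rcases eq_or_ne y 0 with rfl | hy
  · simp
  · field_simp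

end Aux

theorem stmt12 (a b : ℝ) (hab : a < b) (g h : ℝ → ℝ)
    (hg : IntegrableOn g (Ioo a b)) (hh : IntegrableOn h (Ioo a b))
    (hg0 : ∀ᵐ s ∂volume.restrict (Ioo a b), 0 ≤ g s)
    (hh0 : ∀ᵐ s ∂volume.restrict (Ioo a b), 0 < h s)
    (J : Set ℝ) (hJ : MeasurableSet J) (hJsub : J ⊆ Ioo a b)
    (hJpos : 0 < volume J) :
    ∃ J₀ ⊆ J, MeasurableSet J₀ ∧ volume (J \ J₀) = 0 ∧
      ∀ τ₀ ∈ J₀,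
        Tendsto (fun t => (∫ s in Icc τ₀ t \ J, g s) / ∫ s in τ₀..t, h s)
          (nhdsWithin τ₀ (Ioi τ₀)) (nhds 0) ∧
        Tendsto (fun t => (∫ s in Icc t τ₀ \ J, g s) / ∫ s in t..τ₀, h s)
          (nhdsWithin τ₀ (Iio τ₀)) (nhds 0) := by
  set G : ℝ → ℝ := (Ioo a b \ J).indicator g with hGdef
  set H : ℝ → ℝ := (Ioo a b).indicator h with hHdef
  have hGint : Integrable G := (hg.mono_set diff_subset).integrable_indicator
    (measurableSet_Ioo.diff hJ)
  have hHint : Integrable H := hh.integrable_indicator measurableSet_Ioo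
  -- the good set
  set P : ℝ → Prop := fun x =>
    (Tendsto (fun r => ⨍ y in Metric.closedBall x r, ‖G y - G x‖) (nhdsWithin 0 (Ioi 0)) (nhds 0)) ∧
    (Tendsto (fun r => ⨍ y in Metric.closedBall x r, ‖H y - H x‖) (nhdsWithin 0 (Ioi 0)) (nhds 0)) ∧
    0 < h x with hPdef
  have hPae : ∀ᵐ x ∂volume.restrict J, P x := by
    have h1 := ae_restrict_of_ae (μ := volume) (s := J) (stmt12_lebesgue G hGint)
    have h2 := ae_restrict_of_ae (μ := volume) (s := J) (stmt12_lebesgue H hHint)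
    have h3 : ∀ᵐ x ∂volume.restrict J, 0 < h x :=
      ae_restrict_of_ae_restrict_of_subset hJsub hh0
    filter_upwards [h1, h2, h3] with x hx1 hx2 hx3 using ⟨hx1, hx2, hx3⟩
  have hnull : volume ({x | ¬ P x} ∩ J) = 0 := by
    have := ae_iff.1 hPae
    rwa [Measure.restrict_apply' hJ] at this
  set K : Set ℝ := toMeasurable volume ({x | ¬ P x} ∩ J) with hKdef
  refine ⟨J \ K, diff_subset, hJ.diff (measurableSet_toMeasurable _ _), ?_, ?_⟩
  · apply measure_mono_null (t := K) ?_ ?_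
    · intro x hx
      have hxJ := hx.1
      by_cases hxK : x ∈ K
      · exact hxK
      · exact absurd ⟨hxJ, hxK⟩ hx.2
    · rw [hKdef, measure_toMeasurable]; exact hnull
  · intro τ₀ hτ₀
    have hτJ : τ₀ ∈ J := hτ₀.1
    have hτP : P τ₀ := by
      by_contra hc
      exact hτ₀.2 (subset_toMeasurable _ _ ⟨hc, hτJ⟩)
    obtain ⟨hPG, hPH, hhpos⟩ := hτP
    have hτab : τ₀ ∈ Ioo a b := hJsub hτJ
    have hGτ : G τ₀ = 0 := indicator_of_notMem (fun hx => hx.2 hτJ) g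
    have hHτ : H τ₀ = h τ₀ := indicator_of_mem hτab h
    have hHpos : 0 < H τ₀ := by rw [hHτ]; exact hhpos
    -- limits of averaged quantities
    have hnumR := stmt12_num_right G τ₀ hGτ (stmt12_avg_right G hGint τ₀ hPG)
    have hdenR := stmt12_den_right H hHint τ₀ (stmt12_avg_right H hHint τ₀ hPH)
    have hnumL := stmt12_num_left G τ₀ hGτ (stmt12_avg_left G hGint τ₀ hPG)
    have hdenL := stmt12_den_left H hHint τ₀ (stmt12_avg_left H hHint τ₀ hPH)
    constructor
    · have hdiv : Tendsto (fun t => ((∫ y in Icc τ₀ t, G y) / (t - τ₀))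
          / ((∫ y in Ioc τ₀ t, H y) / (t - τ₀))) (nhdsWithin τ₀ (Ioi τ₀)) (nhds 0) := by
        have := hnumR.div hdenR hHpos.ne'
        rw [zero_div] at this
        exact this
      apply hdiv.congr'
      have hbmem : Ioo τ₀ b ∈ nhdsWithin τ₀ (Ioi τ₀) :=
        Ioo_mem_nhdsGT_of_mem ⟨le_refl τ₀, hτab.2⟩
      filter_upwards [hbmem] with t ht
      have h1 : τ₀ < t := ht.1
      have hsub : Icc τ₀ t ⊆ Ioo a b := fun y hy => ⟨lt_of_lt_of_le hτab.1 hy.1,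
        lt_of_le_of_lt hy.2 ht.2⟩
      have hnum : (∫ y in Icc τ₀ t, G y) = ∫ s in Icc τ₀ t \ J, g s := by
        rw [hGdef, setIntegral_indicator (measurableSet_Ioo.diff hJ),
          ← Set.inter_diff_assoc, inter_eq_self_of_subset_left hsub]
      have hden : (∫ y in Ioc τ₀ t, H y) = ∫ s in τ₀..t, h s := by
        rw [intervalIntegral.integral_of_le h1.le, hHdef,
          setIntegral_indicator measurableSet_Ioo,
          inter_eq_self_of_subset_left ((Ioc_subset_Icc_self).trans hsub)]
      rw [stmt12_div_div (sub_pos.2 h1).ne', hnum, hden]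
    · have hdiv : Tendsto (fun t => ((∫ y in Icc t τ₀, G y) / (τ₀ - t))
          / ((∫ y in Ioc t τ₀, H y) / (τ₀ - t))) (nhdsWithin τ₀ (Iio τ₀)) (nhds 0) := by
        have := hnumL.div hdenL hHpos.ne'
        rw [zero_div] at this
        exact this
      apply hdiv.congr'
      have hamem : Ioo a τ₀ ∈ nhdsWithin τ₀ (Iio τ₀) :=
        Ioo_mem_nhdsLT_of_mem ⟨hτab.1, le_refl τ₀⟩
      filter_upwards [hamem] with t ht
      have h1 : t < τ₀ := ht.2
      have hsub : Icc t τ₀ ⊆ Ioo a b := fun y hy => ⟨lt_of_lt_of_le ht.1 hy.1,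
        lt_of_le_of_lt hy.2 hτab.2⟩
      have hnum : (∫ y in Icc t τ₀, G y) = ∫ s in Icc t τ₀ \ J, g s := by
        rw [hGdef, setIntegral_indicator (measurableSet_Ioo.diff hJ),
          ← Set.inter_diff_assoc, inter_eq_self_of_subset_left hsub]
      have hden : (∫ y in Ioc t τ₀, H y) = ∫ s in t..τ₀, h s := by
        rw [intervalIntegral.integral_of_le h1.le, hHdef,
          setIntegral_indicator measurableSet_Ioo,
          inter_eq_self_of_subset_left ((Ioc_subset_Icc_self).trans hsub)]
      rw [stmt12_div_div (sub_pos.2 h1).ne', hnum, hden]
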